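/- Let k be a field, G a group, A an abelian group (written additively) with a left G-action by automorphisms, and α : G × G × G → A a 3-cocycle, i.e. g₁·α(g₂,g₃,g₄) − α(g₁g₂,g₃,g₄) + α(g₁,g₂g₃,g₄) − α(g₁,g₂,g₃g₄) + α(g₁,g₂,g₃) = 0 for all g₁,g₂,g₃,g₄ ∈ G. Let n, n' ≥ 1, let ρ : G → S_n and ρ' : G → S_{n'} be group homomorphisms, and let G act on the right on X := {1,…,n'} × {1,…,n} by (i',i)·g := (ρ'(g⁻¹)(i'), ρ(g⁻¹)(i)). Let β : A → (kˣ)ⁿ and β' : A → (kˣ)^{n'} be G-equivariant group homomorphisms (with coordinate-permuting actions (g·λ)_i = λ_{ρ(g⁻¹)(i)} and (g·λ')_{i'} = λ'_{ρ'(g⁻¹)(i')}), and let c : G × G → (kˣ)ⁿ and c' : G × G → (kˣ)^{n'} be 2-cochains with ∂c = β∘α and ∂c' = β'∘α, i.e. c(g₂,g₃)_{ρ(g₁⁻¹)(i)} · c(g₁,g₂g₃)_i · c(g₁g₂,g₃)_i⁻¹ · c(g₁,g₂)_i⁻¹ = β(α(g₁,g₂,g₃))_i for all g₁,g₂,g₃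 and i (and likewise for c', β', ρ'). Suppose X_λ ⊆ X is a G-invariant subset such that the component homomorphisms satisfy β_i = β'_{i'} (as homomorphisms A → kˣ) for all (i',i) ∈ X_λ. Then z_λ(g₁,g₂)(i',i) := c'(g₁,g₂)_{i'} · (c(g₁,g₂)_i)⁻¹ defines a 2-cocycle of G with values in F(X_λ,kˣ), i.e. z_λ(g₂,g₃)((i',i)·g₁) · z_λ(g₁,g₂g₃)(i',i) = z_λ(g₁g₂,g₃)(i',i) · z_λ(g₁,g₂)(i',i) for all g₁,g₂,g₃ ∈ G and (i',i) ∈ X_λ. Moreover z_λ is normalized if c and c' are normalized. -/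

import Mathlib

/-- given classification data `(n,ρ,β,c)` and `(n',ρ',β',c')` with
`∂c = β∘α` and `∂c' = β'∘α`, and a `G`-invariant subset `X_λ` of `[n'] × [n]` on which
`β_i = β'_{i'}`, the function `z_λ(g₁,g₂)(i',i) = c'(g₁,g₂)_{i'} · c(g₁,g₂)_i⁻¹` is a
2-cocycle of `G` with values in `F(X_λ,kˣ)`, normalized whenever `c` and `c'` are. -/
theorem intertwining_orbit_cocycle
    {k G A : Type*} [Field k] [Group G] [AddCommGroup A] [DistribMulAction G A]
    (α : G → G → G → A)
    (hα : ∀ g₁ g₂ g₃ g₄ : G,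
      g₁ • α g₂ g₃ g₄ - α (g₁ * g₂) g₃ g₄ + α g₁ (g₂ * g₃) g₄
        - α g₁ g₂ (g₃ * g₄) + α g₁ g₂ g₃ = 0)
    (n n' : ℕ) (hn : 1 ≤ n) (hn' : 1 ≤ n')
    (ρ : G →* Equiv.Perm (Fin n)) (ρ' : G →* Equiv.Perm (Fin n'))
    (β : A → Fin n → kˣ) (β' : A → Fin n' → kˣ)
    (hβ_hom : ∀ u v : A, β (u + v) = β u * β v)
    (hβ'_hom : ∀ u v : A, β' (u + v) = β' u * β' v)
    (hβ_eq : ∀ (g : G) (u : A) (i : Fin n), β (g • u) i = β u (ρ g⁻¹ i))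
    (hβ'_eq : ∀ (g : G) (u : A) (i' : Fin n'), β' (g • u) i' = β' u (ρ' g⁻¹ i'))
    (c : G → G → Fin n → kˣ) (c' : G → G → Fin n' → kˣ)
    (hc : ∀ (g₁ g₂ g₃ : G) (i : Fin n),
      c g₂ g₃ (ρ g₁⁻¹ i) * c g₁ (g₂ * g₃) i * (c (g₁ * g₂) g₃ i)⁻¹ * (c g₁ g₂ i)⁻¹
        = β (α g₁ g₂ g₃) i)
    (hc' : ∀ (g₁ g₂ g₃ : G) (i' : Fin n'),
      c' g₂ g₃ (ρ' g₁⁻¹ i') * c' g₁ (g₂ * g₃) i' * (c' (g₁ * g₂) g₃ i')⁻¹ * (c' g₁ g₂ i')⁻¹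
        = β' (α g₁ g₂ g₃) i')
    (Xlam : Set (Fin n' × Fin n))
    (hX_inv : ∀ p ∈ Xlam, ∀ g : G, (ρ' g⁻¹ p.1, ρ g⁻¹ p.2) ∈ Xlam)
    (hX_int : ∀ p ∈ Xlam, ∀ u : A, β u p.2 = β' u p.1) :
    -- `z_λ` is a 2-cocycle of `G` with values in `F(X_λ,kˣ)`
    (∀ (g₁ g₂ g₃ : G), ∀ p ∈ Xlam,
      (c' g₂ g₃ (ρ' g₁⁻¹ p.1) * (c g₂ g₃ (ρ g₁⁻¹ p.2))⁻¹)
          * (c' g₁ (g₂ * g₃) p.1 * (c g₁ (g₂ * g₃) p.2)⁻¹)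
        = (c' (g₁ * g₂) g₃ p.1 * (c (g₁ * g₂) g₃ p.2)⁻¹)
            * (c' g₁ g₂ p.1 * (c g₁ g₂ p.2)⁻¹)) ∧
    -- `z_λ` is normalized whenever `c` and `c'` are normalized
    ((∀ (g : G) (i : Fin n), c g 1 i = 1 ∧ c 1 g i = 1) →
      (∀ (g : G) (i' : Fin n'), c' g 1 i' = 1 ∧ c' 1 g i' = 1) →
      ∀ (g : G), ∀ p ∈ Xlam,
        c' g 1 p.1 * (c g 1 p.2)⁻¹ = 1 ∧ c' 1 g p.1 * (c 1 g p.2)⁻¹ = 1) := by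
  constructor
  · intro g₁ g₂ g₃ p hp
    have h1 := hc g₁ g₂ g₃ p.2
    have h2 := hc' g₁ g₂ g₃ p.1
    have h3 := hX_int p hp (α g₁ g₂ g₃)
    have key : c' g₂ g₃ (ρ' g₁⁻¹ p.1) * c' g₁ (g₂ * g₃) p.1 * (c' (g₁ * g₂) g₃ p.1)⁻¹
        * (c' g₁ g₂ p.1)⁻¹
        = c g₂ g₃ (ρ g₁⁻¹ p.2) * c g₁ (g₂ * g₃) p.2 * (c (g₁ * g₂) g₃ p.2)⁻¹
        * (c g₁ g₂ p.2)⁻¹ := by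
      rw [h1, h2, h3]
    have hk : (c' g₂ g₃ (ρ' g₁⁻¹ p.1) * c' g₁ (g₂ * g₃) p.1 * (c' (g₁ * g₂) g₃ p.1)⁻¹
        * (c' g₁ g₂ p.1)⁻¹ : k)
        = c g₂ g₃ (ρ g₁⁻¹ p.2) * c g₁ (g₂ * g₃) p.2 * (c (g₁ * g₂) g₃ p.2 : kˣ)⁻¹
        * ((c g₁ g₂ p.2 : kˣ)⁻¹ : kˣ) := by exact_mod_cast congrArg (Units.val) key
    ext
    push_cast
    simp only [Units.val_inv_eq_inv_val] at hk ⊢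
    field_simp at hk ⊢
    linear_combination hk
  · intro hcn hcn' g p hp
    refine ⟨?_, ?_⟩
    · rw [(hcn g p.2).1, (hcn' g p.1).1]; simp
    · rw [(hcn g p.2).2, (hcn' g p.1).2]; simp
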